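/- (Uniqueness of the lifting.) Let 𝔨¹ be a (μ₁,λ,κ)-DAEC and 𝔨² a (μ₂,λ,κ)-DAEC, each additionally satisfying Ax III(d) and Ax IV(d), with μ₁ ≤ μ₂. If 𝔨¹ and 𝔨² agree in cardinality λ (i.e. they have the same vocabulary, the same models of cardinality λ, and ≤_{𝔨¹} and ≤_{𝔨²} agree on these), then 𝔨¹ equals the restriction of 𝔨² to models of cardinality < μ₁: K_{𝔨¹} = {M ∈ K_{𝔨²} : ‖M‖ < μ₁} and ≤_{𝔨¹} is ≤_{𝔨²} restricted to this class. -/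

import Mathlib

universe u

open Cardinal

/-! ### Vocabularies and models on an ambient type -/

/-- A vocabulary: function and relation symbols, each with an arity
(a type, of cardinality `≤ λ` in the classes below). -/
structure Vocab : Type (u + 1) where
  Func : Type u
  Rel : Type u
  arF : Func → Type u
  arR : Rel → Type u

/-- A `τ`-structure whose universe is a subset of a fixed ambient type `Ω`. -/
structure ModelOn (τ : Vocab.{u}) (Ω : Type u) : Type u where
  carrier : Set Ω
  funcMap : ∀ f : τ.Func, (τ.arF f → Ω) → Ω
  relMap : ∀ r : τ.Rel, (τ.arR r → Ω) → Prop
  func_mem : ∀ (f : τ.Func) (x : τ.arF f → Ω), (∀ i, x i ∈ carrier) → funcMap f x ∈ carrier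

namespace ModelOn

variable {τ : Vocab.{u}} {Ω : Type u}

/-- `M` is a substructure of `N`. -/
def Sub (M N : ModelOn τ Ω) : Prop :=
  M.carrier ⊆ N.carrier ∧
    (∀ (f : τ.Func) (x : τ.arF f → Ω), (∀ i, x i ∈ M.carrier) → M.funcMap f x = N.funcMap f x) ∧
    (∀ (r : τ.Rel) (x : τ.arR r → Ω), (∀ i, x i ∈ M.carrier) → (M.relMap r x ↔ N.relMap r x))

/-- An embedding of `M` into `N` (injective and structure-preserving on the carrier). -/
structure Emb (M N : ModelOn τ Ω) : Type u where
  toFun : Ω → Ω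
  maps : ∀ a ∈ M.carrier, toFun a ∈ N.carrier
  injOn : ∀ a ∈ M.carrier, ∀ b ∈ M.carrier, toFun a = toFun b → a = b
  map_func : ∀ (f : τ.Func) (x : τ.arF f → Ω), (∀ i, x i ∈ M.carrier) →
    toFun (M.funcMap f x) = N.funcMap f (toFun ∘ x)
  map_rel : ∀ (r : τ.Rel) (x : τ.arR r → Ω), (∀ i, x i ∈ M.carrier) →
    (M.relMap r x ↔ N.relMap r (toFun ∘ x))

/-- An embedding is an isomorphism when its image is the full carrier of the target. -/
def Emb.IsIso {M N : ModelOn τ Ω} (g : Emb M N) : Prop :=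
  g.toFun '' M.carrier = N.carrier

def Isomorphic (M N : ModelOn τ Ω) : Prop := ∃ g : Emb M N, g.IsIso

end ModelOn

/-! ### Directedness for order relations, unions of chains and systems -/

/-- A relation is `κ`-directed: every subset of size `< κ` has an upper bound. -/
def KappaDirectedRel (κ : Cardinal.{u}) {I : Type u} (r : I → I → Prop) : Prop :=
  ∀ s : Set I, #s < κ → ∃ t : I, ∀ x ∈ s, r x t

/-- A (nonempty) directed relation. -/
def DirectedRel {I : Type u} (r : I → I → Prop) : Prop :=
  Nonempty I ∧ ∀ a b : I, ∃ c : I, r a c ∧ r b c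

/-- The union of the universes of an ordinal-indexed chain `⟨M i : i < δ⟩`. -/
def chainUnion {τ : Vocab.{u}} {Ω : Type u} (δ : Ordinal.{u})
    (M : Ordinal.{u} → ModelOn τ Ω) : Set Ω :=
  ⋃ i ∈ Set.Iio δ, (M i).carrier

/-- The union of the universes of an indexed system. -/
def sysUnion {τ : Vocab.{u}} {Ω : Type u} {I : Type u} (M : I → ModelOn τ Ω) : Set Ω :=
  ⋃ s, (M s).carrier

/-- Clubs in an ordinal `ρ`. -/
def IsClubIn (Cs : Set Ordinal.{u}) (ρ : Ordinal.{u}) : Prop :=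
  Cs ⊆ Set.Iio ρ ∧ (∀ α, α < ρ → ∃ β ∈ Cs, α ≤ β) ∧
  ∀ δ, δ < ρ → Order.IsSuccLimit δ → (∀ α, α < δ → ∃ β ∈ Cs, α ≤ β ∧ β < δ) → δ ∈ Cs

/-- Stationary subsets of an ordinal `ρ`. -/
def IsStationaryIn (S : Set Ordinal.{u}) (ρ : Ordinal.{u}) : Prop :=
  S ⊆ Set.Iio ρ ∧ ∀ Cs : Set Ordinal.{u}, IsClubIn Cs ρ → (S ∩ Cs).Nonempty

/-- Cofinality on `WithTop Cardinal` (with `cf ∞ = ∞`). -/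
noncomputable def wcof (μ : WithTop Cardinal.{u}) : WithTop Cardinal.{u} :=
  μ.map fun c => c.ord.cof

/-- Regularity on `WithTop Cardinal` (`∞` counts as regular). -/
def WRegular (μ : WithTop Cardinal.{u}) : Prop := wcof μ = μ

/-! ### Basic `(μ,λ,κ)`-classes -/

/-- A basic `(μ,λ,κ)`-class: a class `K` of `τ`-structures (with universes of
cardinality in `[λ,μ)`) closed under isomorphism, together with a partial order `≤`
refining substructure, preserved by isomorphisms of pairs, satisfying
Ax I(a), Ax V and Ax VI (LST down to `λ`); here `κ` is regular, `λ = λ^{<κ} ≥ κ`,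
`λ < μ` and `χ < μ → χ^{<κ} < μ` (`μ = ⊤` is allowed). -/
structure BasicClass (τ : Vocab.{u}) (Ω : Type u) (μ : WithTop Cardinal.{u})
    (lam κ : Cardinal.{u}) where
  K : ModelOn τ Ω → Prop
  le : ModelOn τ Ω → ModelOn τ Ω → Prop
  kappa_isRegular : κ.IsRegular
  lam_powerlt : lam ^< κ = lam
  kappa_le_lam : κ ≤ lam
  lam_lt_mu : (lam : WithTop Cardinal.{u}) < μ
  mu_powerlt_closed : ∀ χ : Cardinal.{u}, (χ : WithTop Cardinal.{u}) < μ →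
    ((χ ^< κ : Cardinal.{u}) : WithTop Cardinal.{u}) < μ
  arity_func_le : ∀ f : τ.Func, #(τ.arF f) ≤ lam
  arity_rel_le : ∀ r : τ.Rel, #(τ.arR r) ≤ lam
  K_isoClosed : ∀ {M N : ModelOn τ Ω}, M.Isomorphic N → K M → K N
  le_isoClosed : ∀ {M₁ N₁ M₂ N₂ : ModelOn τ Ω} (g : ModelOn.Emb N₁ N₂), g.IsIso →
    M₁.Sub N₁ → M₂.Sub N₂ → g.toFun '' M₁.carrier = M₂.carrier → le M₁ N₁ → le M₂ N₂
  size_ge : ∀ M : ModelOn τ Ω, K M → lam ≤ #M.carrier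
  size_lt : ∀ M : ModelOn τ Ω, K M →
    ((#M.carrier : Cardinal.{u}) : WithTop Cardinal.{u}) < μ
  le_K_left : ∀ {M N : ModelOn τ Ω}, le M N → K M
  le_K_right : ∀ {M N : ModelOn τ Ω}, le M N → K N
  le_refl : ∀ M : ModelOn τ Ω, K M → le M M
  le_trans : ∀ {M N P : ModelOn τ Ω}, le M N → le N P → le M P
  le_antisymm : ∀ {M N : ModelOn τ Ω}, le M N → le N M → M = N
  axI : ∀ {M N : ModelOn τ Ω}, le M N → M.Sub N
  axV : ∀ {N₁ N₂ M : ModelOn τ Ω}, le N₁ M → le N₂ M → N₁.carrier ⊆ N₂.carrier → le N₁ N₂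
  axVI : ∀ M : ModelOn τ Ω, K M → ∀ A : Set Ω, A ⊆ M.carrier → #A ≤ lam →
    ∃ N : ModelOn τ Ω, le N M ∧ #N.carrier = lam ∧ A ⊆ N.carrier

namespace BasicClass

variable {τ : Vocab.{u}} {Ω : Type u} {μ : WithTop Cardinal.{u}} {lam κ : Cardinal.{u}}

/-- `f` is a `≤_𝔨`-embedding of `M` into `N`: an isomorphism onto some `M' ≤_𝔨 N`. -/
def IsKEmb (C : BasicClass τ Ω μ lam κ) (M N : ModelOn τ Ω) (g : ModelOn.Emb M N) : Prop :=
  ∃ M' : ModelOn τ Ω, C.le M' N ∧ g.toFun '' M.carrier = M'.carrier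

/-- `⟨M i : i < δ⟩` is a `≤`-increasing chain in `K`. -/
def IsChain (C : BasicClass τ Ω μ lam κ) (δ : Ordinal.{u})
    (M : Ordinal.{u} → ModelOn τ Ω) : Prop :=
  (∀ i, i < δ → C.K (M i)) ∧ ∀ i j, i ≤ j → j < δ → C.le (M i) (M j)

/-- A `≤`-increasing system indexed by an order relation. -/
def IsSystem (C : BasicClass τ Ω μ lam κ) {I : Type u} (r : I → I → Prop)
    (M : I → ModelOn τ Ω) : Prop :=
  (∀ s, C.K (M s)) ∧ ∀ s t : I, r s t → C.le (M s) (M t)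

/-- Ax III(a): increasing chains of cofinality `≥ κ` have upper bounds whose
universe is the union. -/
def AxIIIa (C : BasicClass τ Ω μ lam κ) : Prop :=
  ∀ (δ : Ordinal.{u}) (M : Ordinal.{u} → ModelOn τ Ω), 0 < δ → C.IsChain δ M →
    κ ≤ δ.cof → ((#(chainUnion δ M) : Cardinal.{u}) : WithTop Cardinal.{u}) < μ →
    ∃ N : ModelOn τ Ω, C.K N ∧ (∀ i, i < δ → C.le (M i) N) ∧ N.carrier = chainUnion δ M

/-- Ax III(b): increasing chains have upper bounds. -/
def AxIIIb (C : BasicClass τ Ω μ lam κ) : Prop :=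
  ∀ (δ : Ordinal.{u}) (M : Ordinal.{u} → ModelOn τ Ω), 0 < δ → C.IsChain δ M →
    ((#(chainUnion δ M) : Cardinal.{u}) : WithTop Cardinal.{u}) < μ →
    ∃ N : ModelOn τ Ω, C.K N ∧ ∀ i, i < δ → C.le (M i) N

/-- Ax III(c): `κ`-directed increasing systems have upper bounds. -/
def AxIIIc (C : BasicClass τ Ω μ lam κ) : Prop :=
  ∀ (I : Type u) (r : I → I → Prop), IsPartialOrder I r → KappaDirectedRel κ r →
    ∀ M : I → ModelOn τ Ω, C.IsSystem r M →
    (((Cardinal.sum fun s => #(M s).carrier) : Cardinal.{u}) : WithTop Cardinal.{u}) < μ →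
    ∃ N : ModelOn τ Ω, C.K N ∧ ∀ s, C.le (M s) N

/-- Ax III(d): `κ`-directed increasing systems with `|I| < μ` have a unique
upper bound whose universe is the union (the `≤`-union). -/
def AxIIId (C : BasicClass τ Ω μ lam κ) : Prop :=
  ∀ (I : Type u) (r : I → I → Prop), IsPartialOrder I r → KappaDirectedRel κ r →
    ∀ M : I → ModelOn τ Ω, C.IsSystem r M →
    ((#I : Cardinal.{u}) : WithTop Cardinal.{u}) < μ →
    ((#(sysUnion M) : Cardinal.{u}) : WithTop Cardinal.{u}) < μ →
    ∃! N : ModelOn τ Ω, C.K N ∧ N.carrier = sysUnion M ∧ ∀ s, C.le (M s) N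

/-- Ax III(e): like Ax III(c) for arbitrary directed index orders. -/
def AxIIIe (C : BasicClass τ Ω μ lam κ) : Prop :=
  ∀ (I : Type u) (r : I → I → Prop), IsPartialOrder I r → DirectedRel r →
    ∀ M : I → ModelOn τ Ω, C.IsSystem r M →
    (((Cardinal.sum fun s => #(M s).carrier) : Cardinal.{u}) : WithTop Cardinal.{u}) < μ →
    ∃ N : ModelOn τ Ω, C.K N ∧ ∀ s, C.le (M s) N

/-- Ax IV(a): weak smoothness for chains of cofinality `≥ κ`. -/
def AxIVa (C : BasicClass τ Ω μ lam κ) : Prop :=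
  ∀ (δ : Ordinal.{u}) (M : Ordinal.{u} → ModelOn τ Ω), 0 < δ → C.IsChain δ M →
    κ ≤ δ.cof →
    ∀ Mtop : ModelOn τ Ω, C.K Mtop → (∀ i, i < δ → C.le (M i) Mtop) →
      Mtop.carrier = chainUnion δ M →
    ∀ N : ModelOn τ Ω, C.K N → (∀ i, i < δ → C.le (M i) N) → C.le Mtop N

/-- Ax IV(b): any two upper bounds of a chain can be amalgamated over the chain. -/
def AxIVb (C : BasicClass τ Ω μ lam κ) : Prop :=
  ∀ (δ : Ordinal.{u}) (M : Ordinal.{u} → ModelOn τ Ω), 0 < δ → C.IsChain δ M →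
    ∀ N₁ N₂ : ModelOn τ Ω, (∀ i, i < δ → C.le (M i) N₁) → (∀ i, i < δ → C.le (M i) N₂) →
    ∃ (N : ModelOn τ Ω) (f₁ : ModelOn.Emb N₁ N) (f₂ : ModelOn.Emb N₂ N),
      C.K N ∧ C.IsKEmb N₁ N f₁ ∧ C.IsKEmb N₂ N f₂ ∧
      ∀ i, i < δ → ∀ a ∈ (M i).carrier, f₁.toFun a = f₂.toFun a

/-- Ax IV(c): weak uniqueness of bounds of `κ`-directed systems. -/
def AxIVc (C : BasicClass τ Ω μ lam κ) : Prop :=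
  ∀ (I : Type u) (r : I → I → Prop), IsPartialOrder I r → KappaDirectedRel κ r →
    ∀ M : I → ModelOn τ Ω, C.IsSystem r M →
    ∀ N₁ N₂ : ModelOn τ Ω, (∀ s, C.le (M s) N₁) → (∀ s, C.le (M s) N₂) →
    ∃ (N₂' : ModelOn τ Ω) (f : ModelOn.Emb N₁ N₂'),
      C.le N₂ N₂' ∧ C.IsKEmb N₁ N₂' f ∧ ∀ s, ∀ a ∈ (M s).carrier, f.toFun a = a

/-- Ax IV(d) (smoothness): a bound of a `κ`-directed system whose universe is the
union lies below every bound. -/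
def AxIVd (C : BasicClass τ Ω μ lam κ) : Prop :=
  ∀ (I : Type u) (r : I → I → Prop), IsPartialOrder I r → KappaDirectedRel κ r →
    ∀ M : I → ModelOn τ Ω, C.IsSystem r M →
    ∀ Mtop : ModelOn τ Ω, C.K Mtop → (∀ s, C.le (M s) Mtop) → Mtop.carrier = sysUnion M →
    ∀ N : ModelOn τ Ω, C.K N → (∀ s, C.le (M s) N) → C.le Mtop N

/-- Ax IV(e): like Ax IV(c) for arbitrary directed index orders. -/
def AxIVe (C : BasicClass τ Ω μ lam κ) : Prop :=
  ∀ (I : Type u) (r : I → I → Prop), IsPartialOrder I r → DirectedRel r →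
    ∀ M : I → ModelOn τ Ω, C.IsSystem r M →
    ∀ N₁ N₂ : ModelOn τ Ω, (∀ s, C.le (M s) N₁) → (∀ s, C.le (M s) N₂) →
    ∃ (N₂' : ModelOn τ Ω) (f : ModelOn.Emb N₁ N₂'),
      C.le N₂ N₂' ∧ C.IsKEmb N₁ N₂' f ∧ ∀ s, ∀ a ∈ (M s).carrier, f.toFun a = a

/-- `P` is `≤`-prime over the chain `⟨M i : i < δ⟩`. -/
def IsPrimeOverChain (C : BasicClass τ Ω μ lam κ) (δ : Ordinal.{u})
    (M : Ordinal.{u} → ModelOn τ Ω) (P : ModelOn τ Ω) : Prop :=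
  C.K P ∧ (∀ i, i < δ → C.le (M i) P) ∧
    ∀ N : ModelOn τ Ω, C.K N → (∀ i, i < δ → C.le (M i) N) →
      ∃ g : ModelOn.Emb P N, C.IsKEmb P N g ∧ ∀ a ∈ chainUnion δ M, g.toFun a = a

/-- Ax III(f): primes over chains of cofinality `< κ`. -/
def AxIIIf (C : BasicClass τ Ω μ lam κ) : Prop :=
  ∀ (δ : Ordinal.{u}) (M : Ordinal.{u} → ModelOn τ Ω), 0 < δ → C.IsChain δ M →
    δ.cof < κ → ((#(chainUnion δ M) : Cardinal.{u}) : WithTop Cardinal.{u}) < μ →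
    ∃ P : ModelOn τ Ω, C.IsPrimeOverChain δ M P

/-- `P` is `≤`-prime over a directed system. -/
def IsPrimeOverSystem (C : BasicClass τ Ω μ lam κ) {I : Type u} (r : I → I → Prop)
    (M : I → ModelOn τ Ω) (P : ModelOn τ Ω) : Prop :=
  C.K P ∧ (∀ s, C.le (M s) P) ∧
    ∀ N : ModelOn τ Ω, C.K N → (∀ s, C.le (M s) N) →
      ∃ g : ModelOn.Emb P N, C.IsKEmb P N g ∧ ∀ a ∈ sysUnion M, g.toFun a = a

/-- Ax IV(f): primes over directed systems. -/
def AxIVf (C : BasicClass τ Ω μ lam κ) : Prop :=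
  ∀ (I : Type u) (r : I → I → Prop), IsPartialOrder I r → DirectedRel r →
    ∀ M : I → ModelOn τ Ω, C.IsSystem r M →
    ((#(sysUnion M) : Cardinal.{u}) : WithTop Cardinal.{u}) < μ →
    ∃ P : ModelOn τ Ω, C.IsPrimeOverSystem r M P

/-- The amalgamation property. -/
def HasAmalgamation (C : BasicClass τ Ω μ lam κ) : Prop :=
  ∀ M₀ M₁ M₂ : ModelOn τ Ω, C.le M₀ M₁ → C.le M₀ M₂ →
    ∃ (N : ModelOn τ Ω) (f₁ : ModelOn.Emb M₁ N) (f₂ : ModelOn.Emb M₂ N),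
      C.K N ∧ C.IsKEmb M₁ N f₁ ∧ C.IsKEmb M₂ N f₂ ∧
      ∀ a ∈ M₀.carrier, f₁.toFun a = f₂.toFun a

/-- The several kinds of DAEC. -/
def IsDAEC (C : BasicClass τ Ω μ lam κ) : ℕ → Prop
  | 0 => C.AxIIIa ∧ C.AxIVa
  | 1 => C.AxIIIa ∧ C.AxIVa ∧ C.AxIIIb ∧ C.AxIVb
  | 2 => C.AxIIIa ∧ C.AxIVa ∧ C.AxIIId ∧ C.AxIVd
  | 4 => C.AxIIIa ∧ C.AxIVa ∧ C.AxIIIb ∧ C.AxIVb ∧ C.AxIIId ∧ C.AxIVe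
  | _ => False

end BasicClass

/-! ### Orbital types -/

/-- A pointed pair `(M,N,a)` with `M ≤_𝔨 N` and `a ∈ N`. -/
structure BasicClass.PtType {τ : Vocab.{u}} {Ω : Type u} {μ : WithTop Cardinal.{u}}
    {lam κ : Cardinal.{u}} (C : BasicClass τ Ω μ lam κ) : Type u where
  M : ModelOn τ Ω
  N : ModelOn τ Ω
  a : Ω
  le_MN : C.le M N
  mem : a ∈ N.carrier

namespace BasicClass

variable {τ : Vocab.{u}} {Ω : Type u} {μ : WithTop Cardinal.{u}} {lam κ : Cardinal.{u}}

/-- The atomic relation `𝓔^at`: two pointed pairs over the same `M` are identified by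
a pair of `≤`-embeddings into a common model, fixing `M` pointwise and matching the points. -/
def AtEq (C : BasicClass τ Ω μ lam κ) (t₁ t₂ : C.PtType) : Prop :=
  t₁.M = t₂.M ∧ ∃ (N' : ModelOn τ Ω) (f₁ : ModelOn.Emb t₁.N N') (f₂ : ModelOn.Emb t₂.N N'),
    C.K N' ∧ C.IsKEmb t₁.N N' f₁ ∧ C.IsKEmb t₂.N N' f₂ ∧
    (∀ a ∈ t₁.M.carrier, f₁.toFun a = a) ∧ (∀ a ∈ t₂.M.carrier, f₂.toFun a = a) ∧
    f₁.toFun t₁.a = f₂.toFun t₂.a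

/-- Equality of orbital types: the transitive closure of the atomic relation. -/
def TypeEquiv (C : BasicClass τ Ω μ lam κ) : C.PtType → C.PtType → Prop :=
  Relation.TransGen C.AtEq

/-- Restricting a type to a smaller model. -/
def PtType.restrict {C : BasicClass τ Ω μ lam κ} (t : C.PtType) (M₀ : ModelOn τ Ω)
    (h : C.le M₀ t.M) : C.PtType :=
  ⟨M₀, t.N, t.a, C.le_trans h t.le_MN, t.mem⟩

/-- `𝔨` is stable in `χ`. -/
def StableIn (C : BasicClass τ Ω μ lam κ) (χ : Cardinal.{u}) : Prop :=
  lam ≤ χ ∧ χ ^< κ = χ ∧ ((χ : WithTop Cardinal.{u}) < μ) ∧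
  (∀ M : ModelOn τ Ω, C.K M → #M.carrier = χ →
    ∃ T : Set C.PtType, #T ≤ χ ∧
      ∀ t : C.PtType, t.M = M → ∃ t' ∈ T, C.TypeEquiv t t') ∧
  (∀ M₀ M₁ M₂ : ModelOn τ Ω, #M₀.carrier = χ → #M₁.carrier = χ → #M₂.carrier = χ →
    C.le M₀ M₁ → C.le M₀ M₂ →
    ∃ (N : ModelOn τ Ω) (f₁ : ModelOn.Emb M₁ N) (f₂ : ModelOn.Emb M₂ N),
      C.K N ∧ C.IsKEmb M₁ N f₁ ∧ C.IsKEmb M₂ N f₂ ∧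
      ∀ a ∈ M₀.carrier, f₁.toFun a = f₂.toFun a)

/-- `N` is `≤`-universal over `M` in cardinality `χ`. -/
def UnivOver (C : BasicClass τ Ω μ lam κ) (χ : Cardinal.{u}) (N M : ModelOn τ Ω) : Prop :=
  C.le M N ∧ ∀ M' : ModelOn τ Ω, C.le M M' → #M'.carrier = χ →
    ∃ f : ModelOn.Emb M' N, C.IsKEmb M' N f ∧ ∀ a ∈ M.carrier, f.toFun a = a

/-- A `≤`-increasing `≤`-semi-continuous sequence `⟨M i : i < α⟩`. -/
def SemiCont (C : BasicClass τ Ω μ lam κ) (α : Ordinal.{u})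
    (M : Ordinal.{u} → ModelOn τ Ω) : Prop :=
  (∀ i, i < α → C.K (M i)) ∧
  (∀ i j, i ≤ j → j < α → C.le (M i) (M j)) ∧
  (∀ δ, δ < α → Order.IsSuccLimit δ → κ ≤ δ.cof → (M δ).carrier = chainUnion δ M) ∧
  (∀ δ, δ < α → Order.IsSuccLimit δ → δ.cof < κ → C.IsPrimeOverChain δ M (M δ))

/-- `N` is `(χ,σ)`-brimmed over `M`. -/
def Brimmed (C : BasicClass τ Ω μ lam κ) (χ σ : Cardinal.{u}) (N M : ModelOn τ Ω) : Prop :=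
  ∃ Ms : Ordinal.{u} → ModelOn τ Ω,
    C.SemiCont σ.ord Ms ∧
    (∀ i, i < σ.ord → #(Ms i).carrier = χ) ∧
    Ms 0 = M ∧
    (∀ i, i < σ.ord → C.UnivOver χ (Ms (i + 1)) (Ms i)) ∧
    C.K N ∧ (∀ i, i < σ.ord → C.le (Ms i) N) ∧ N.carrier = chainUnion σ.ord Ms

/-- `Mstar ∈ K_χ` is `(χ, ≥κ)`-superlimit₁. -/
def Superlimit1 (C : BasicClass τ Ω μ lam κ) (χ : Cardinal.{u}) (Mstar : ModelOn τ Ω) : Prop :=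
  C.K Mstar ∧ #Mstar.carrier = χ ∧
  (∀ N : ModelOn τ Ω, C.K N → #N.carrier = χ →
    ∃ (f : ModelOn.Emb N Mstar) (M' : ModelOn τ Ω),
      C.le M' Mstar ∧ M' ≠ Mstar ∧ f.toFun '' N.carrier = M'.carrier) ∧
  (∀ (δ : Ordinal.{u}) (Ms : Ordinal.{u} → ModelOn τ Ω) (Mδ : ModelOn τ Ω),
    0 < δ → δ.card ≤ χ → κ ≤ δ.cof →
    (∀ i j, i ≤ j → j < δ → C.le (Ms i) (Ms j)) →
    (∀ i, i < δ → (Ms i).Isomorphic Mstar) →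
    (∀ i, i < δ → C.le (Ms i) Mδ) → Mδ.carrier = chainUnion δ Ms →
    Mδ.Isomorphic Mstar)

/-- `Mstar ∈ K_χ` is `(χ, ≥κ)`-superlimit₂. -/
def Superlimit2 (C : BasicClass τ Ω μ lam κ) (χ : Cardinal.{u}) (Mstar : ModelOn τ Ω) : Prop :=
  C.K Mstar ∧ #Mstar.carrier = χ ∧
  (∀ N : ModelOn τ Ω, C.K N → #N.carrier = χ →
    ∃ (f : ModelOn.Emb N Mstar) (M' : ModelOn τ Ω),
      C.le M' Mstar ∧ M' ≠ Mstar ∧ f.toFun '' N.carrier = M'.carrier) ∧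
  (∀ (I : Type u) (r : I → I → Prop), IsPartialOrder I r → KappaDirectedRel κ r →
    #I ≤ χ →
    ∀ (Ms : I → ModelOn τ Ω) (Mtop : ModelOn τ Ω),
      C.IsSystem r Ms →
      (∀ s, (Ms s).Isomorphic Mstar) →
      (∀ s, C.le (Ms s) Mtop) → Mtop.carrier = sysUnion Ms →
      Mtop.Isomorphic Mstar)

/-! ### The lifting of a `(λ⁺,λ,κ)`-class -/

/-- `⟨Msys s : s ∈ I⟩` (a `κ`-directed, `≤`-increasing system of models of size `λ`)
is a witness for `M` belonging to the lifted class. -/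
def IsWitness (C : BasicClass τ Ω μ lam κ) {I : Type u} (r : I → I → Prop)
    (Msys : I → ModelOn τ Ω) (M : ModelOn τ Ω) : Prop :=
  IsPartialOrder I r ∧ KappaDirectedRel κ r ∧
  (∀ s, C.K (Msys s) ∧ #(Msys s).carrier = lam) ∧
  (∀ s t, r s t → C.le (Msys s) (Msys t)) ∧
  (∀ J : Set I, #J ≤ lam → KappaDirectedRel κ (fun a b : J => r a.1 b.1) →
    ∀ MJ : ModelOn τ Ω, C.K MJ → MJ.carrier = ⋃ t ∈ J, (Msys t).carrier →
      (∀ t ∈ J, C.le (Msys t) MJ) → MJ.Sub M) ∧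
  M.carrier = ⋃ t, (Msys t).carrier

/-- The class of models of the lifting `𝔨'` of `𝔨_λ`. -/
def LiftK (C : BasicClass τ Ω μ lam κ) (M : ModelOn τ Ω) : Prop :=
  ∃ (I : Type u) (r : I → I → Prop) (Msys : I → ModelOn τ Ω), C.IsWitness r Msys M

/-- The order of the lifting `𝔨'` of `𝔨_λ`. -/
def LiftLE (C : BasicClass τ Ω μ lam κ) (M N : ModelOn τ Ω) : Prop :=
  ∃ (J : Type u) (r : J → J → Prop) (I : Set J) (Msys : J → ModelOn τ Ω),
    C.IsWitness r Msys N ∧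
    C.IsWitness (fun a b : I => r a.1 b.1) (fun s : I => Msys s.1) M

end BasicClass

/-! ### Good `(μ,λ,κ)`-ι-frames -/

/-- `(M,N,a)` is a prime triple for the class of basic types `bs`. -/
def IsK3pr {τ : Vocab.{u}} {Ω : Type u} {μ : WithTop Cardinal.{u}} {lam κ : Cardinal.{u}}
    (C : BasicClass τ Ω μ lam κ) (bs : C.PtType → Prop)
    (M N : ModelOn τ Ω) (a : Ω) : Prop :=
  ∃ (h : C.le M N) (ha : a ∈ N.carrier),
    bs ⟨M, N, a, h, ha⟩ ∧
    ∀ (N' : ModelOn τ Ω) (a' : Ω) (h' : C.le M N') (ha' : a' ∈ N'.carrier),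
      C.TypeEquiv ⟨M, N, a, h, ha⟩ ⟨M, N', a', h', ha'⟩ →
      ∃ g : ModelOn.Emb N N', C.IsKEmb N N' g ∧
        (∀ x ∈ M.carrier, g.toFun x = x) ∧ g.toFun a = a'

/-- A good `(μ,λ,κ)`-`ι`-frame: a `(μ,λ,κ)`-4-DAEC with a superlimit in `λ`,
amalgamation, JEP, no maximal model, primes (over chains for `ι ≥ 1`, over directed
systems for `ι = 4`), a class of basic types with density and bs-stability, and a
non-forking relation with the usual axioms. -/
structure GoodFrame (τ : Vocab.{u}) (Ω : Type u) (μ : WithTop Cardinal.{u})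
    (lam κ : Cardinal.{u}) (ι : ℕ) where
  C : BasicClass τ Ω μ lam κ
  axIIIa : C.AxIIIa
  axIVa : C.AxIVa
  axIIIb : C.AxIIIb
  axIVb : C.AxIVb
  axIIId : C.AxIIId
  axIVe : C.AxIVe
  primes_chain : 1 ≤ ι → C.AxIIIf
  primes_directed : 4 ≤ ι → C.AxIVf
  superlimit : ∃ Mstar : ModelOn τ Ω, C.Superlimit1 lam Mstar
  amalg : C.HasAmalgamation
  jep : ∀ M N : ModelOn τ Ω, C.K M → C.K N →
    ∃ (P : ModelOn τ Ω) (f : ModelOn.Emb M P) (g : ModelOn.Emb N P),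
      C.K P ∧ C.IsKEmb M P f ∧ C.IsKEmb N P g
  noMaximal : ∀ M : ModelOn τ Ω, C.K M → ∃ N : ModelOn τ Ω, C.le M N ∧ N ≠ M
  bs : C.PtType → Prop
  bs_equivClosed : ∀ t₁ t₂ : C.PtType, C.TypeEquiv t₁ t₂ → bs t₁ → bs t₂
  bs_nonalg : ∀ t : C.PtType, bs t → t.a ∉ t.M.carrier
  density : ∀ (M N : ModelOn τ Ω) (h : C.le M N), M ≠ N →
    ∃ (a : Ω) (ha : a ∈ N.carrier), a ∉ M.carrier ∧ bs ⟨M, N, a, h, ha⟩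
  bs_stability : ∀ M : ModelOn τ Ω, C.K M →
    ∃ T : Set C.PtType, #T ≤ (#M.carrier) ^< κ ∧
      ∀ t : C.PtType, t.M = M → bs t → ∃ t' ∈ T, C.TypeEquiv t t'
  nf : ModelOn τ Ω → ModelOn τ Ω → Ω → ModelOn τ Ω → Prop
  nf_spec : ∀ M₀ M₁ a M₃, nf M₀ M₁ a M₃ →
    C.le M₀ M₁ ∧ ∃ (h₁ : C.le M₁ M₃) (ha : a ∈ M₃.carrier),
      a ∉ M₁.carrier ∧ bs ⟨M₁, M₃, a, h₁, ha⟩ ∧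
      ∃ h₀ : C.le M₀ M₃, bs ⟨M₀, M₃, a, h₀, ha⟩
  nf_base : ∀ (M₀ M₃ : ModelOn τ Ω) (a : Ω) (h : C.le M₀ M₃) (ha : a ∈ M₃.carrier),
    a ∉ M₀.carrier → (nf M₀ M₀ a M₃ ↔ bs ⟨M₀, M₃, a, h, ha⟩)
  nf_typeInv : ∀ (M₀ M₁ M₃ M₃' : ModelOn τ Ω) (a a' : Ω)
    (h : C.le M₁ M₃) (ha : a ∈ M₃.carrier) (h' : C.le M₁ M₃') (ha' : a' ∈ M₃'.carrier),
    C.TypeEquiv ⟨M₁, M₃, a, h, ha⟩ ⟨M₁, M₃', a', h', ha'⟩ →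
    nf M₀ M₁ a M₃ → nf M₀ M₁ a' M₃'
  nf_mono : ∀ {M₀ M₀' M₁' M₁ M₃ M₃' : ModelOn τ Ω} (a : Ω),
    C.le M₀ M₀' → C.le M₀' M₁' → C.le M₁' M₁ → C.le M₁ M₃ → C.le M₃ M₃' →
    a ∉ M₁'.carrier → nf M₀ M₁ a M₃ → nf M₀' M₁' a M₃'
  nf_restr : ∀ {M₀ M₁ M₃ M₃'' : ModelOn τ Ω} (a : Ω),
    C.le M₁ M₃'' → C.le M₃'' M₃ → a ∈ M₃''.carrier →
    (nf M₀ M₁ a M₃ ↔ nf M₀ M₁ a M₃'')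
  nf_trans : ∀ {M₀ M₀' M₀'' M₃ : ModelOn τ Ω} (a : Ω),
    C.le M₀ M₀' → C.le M₀' M₀'' → C.le M₀'' M₃ →
    nf M₀' M₀'' a M₃ → nf M₀ M₀' a M₃ → nf M₀ M₀'' a M₃
  nf_localChar : ∀ (I : Type u) (r : I → I → Prop), IsPartialOrder I r →
    KappaDirectedRel κ r → ∀ Msys : I → ModelOn τ Ω, C.IsSystem r Msys →
    ∀ Mu : ModelOn τ Ω, C.K Mu → (∀ s, C.le (Msys s) Mu) → Mu.carrier = sysUnion Msys →
    ∀ (N : ModelOn τ Ω) (a : Ω) (h : C.le Mu N) (ha : a ∈ N.carrier),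
      a ∉ Mu.carrier → bs ⟨Mu, N, a, h, ha⟩ →
      ∃ s : I, ∀ t, r s t → nf (Msys t) Mu a N
  nf_unique : ∀ (M₀ M₁ N N' : ModelOn τ Ω) (a b : Ω)
    (h₀ : C.le M₀ M₁) (hN : C.le M₁ N) (hN' : C.le M₁ N')
    (ha : a ∈ N.carrier) (hb : b ∈ N'.carrier),
    nf M₀ M₁ a N → nf M₀ M₁ b N' →
    C.TypeEquiv ⟨M₀, N, a, C.le_trans h₀ hN, ha⟩ ⟨M₀, N', b, C.le_trans h₀ hN', hb⟩ →
    C.TypeEquiv ⟨M₁, N, a, hN, ha⟩ ⟨M₁, N', b, hN', hb⟩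
  nf_symm : 3 ≤ ι → ∀ (M₀ M₁ M₂ M₃ : ModelOn τ Ω) (a₁ a₂ : Ω),
    C.le M₀ M₁ → C.le M₀ M₂ → C.le M₁ M₃ → C.le M₂ M₃ →
    a₁ ∈ M₁.carrier → a₂ ∈ M₂.carrier →
    IsK3pr C bs M₀ M₁ a₁ → IsK3pr C bs M₀ M₂ a₂ →
    (nf M₀ M₁ a₂ M₃ ↔ nf M₀ M₂ a₁ M₃)
  nf_exists : ∀ (M N : ModelOn τ Ω), C.le M N →
    ∀ (P : ModelOn τ Ω) (a : Ω) (h₁ : C.le M P) (h₂ : a ∈ P.carrier),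
    bs ⟨M, P, a, h₁, h₂⟩ →
    ∃ (Q : ModelOn τ Ω) (b : Ω) (hNQ : C.le N Q) (hb : b ∈ Q.carrier) (hMQ : C.le M Q),
      nf M N b Q ∧ C.TypeEquiv ⟨M, Q, b, hMQ, hb⟩ ⟨M, P, a, h₁, h₂⟩
  nf_continuity : ∀ (δ : Ordinal.{u}) (Ms : Ordinal.{u} → ModelOn τ Ω), 0 < δ →
    C.IsChain δ Ms → ∀ Mδ : ModelOn τ Ω, C.K Mδ → (∀ i, i < δ → C.le (Ms i) Mδ) →
    Mδ.carrier = chainUnion δ Ms →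
    ∀ (N : ModelOn τ Ω) (a : Ω), C.le Mδ N → a ∈ N.carrier →
    (∀ i, i < δ → nf (Ms 0) (Ms i) a N) → nf (Ms 0) Mδ a N
  nf_strong_continuity : ∀ (δ : Ordinal.{u}) (Ms : Ordinal.{u} → ModelOn τ Ω), 0 < δ →
    C.IsChain δ Ms → ∀ Mδ : ModelOn τ Ω, C.IsPrimeOverChain δ Ms Mδ →
    ∀ (N : ModelOn τ Ω) (b : Ω), C.le Mδ N → b ∈ N.carrier → b ∉ Mδ.carrier →
    (∀ i, i < δ → nf (Ms 0) (Ms i) b N) → nf (Ms 0) Mδ b N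
  primes_pr : 1 ≤ ι →
    ∀ (M P : ModelOn τ Ω) (a : Ω) (h₁ : C.le M P) (h₂ : a ∈ P.carrier),
    bs ⟨M, P, a, h₁, h₂⟩ →
    ∃ (N : ModelOn τ Ω) (b : Ω) (hMN : C.le M N) (hb : b ∈ N.carrier),
      IsK3pr C bs M N b ∧ C.TypeEquiv ⟨M, N, b, hMN, hb⟩ ⟨M, P, a, h₁, h₂⟩
  based_small : ∀ (N P : ModelOn τ Ω) (a : Ω) (h₁ : C.le N P) (h₂ : a ∈ P.carrier),
    bs ⟨N, P, a, h₁, h₂⟩ → ∃ M : ModelOn τ Ω, C.le M N ∧ #M.carrier = lam ∧ nf M N a P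

namespace GoodFrame

variable {τ : Vocab.{u}} {Ω : Type u} {μ : WithTop Cardinal.{u}} {lam κ : Cardinal.{u}} {ι : ℕ}

/-- Prime triples of the frame. -/
def K3prT (F : GoodFrame τ Ω μ lam κ ι) (M N : ModelOn τ Ω) (a : Ω) : Prop :=
  IsK3pr F.C F.bs M N a

/-- The set `J` is independent in `(M₀, M₁, M₂)`. -/
def Independent (F : GoodFrame τ Ω μ lam κ ι) (M₀ M₁ M₂ : ModelOn τ Ω) (J : Set Ω) : Prop :=
  F.C.le M₀ M₁ ∧ F.C.le M₁ M₂ ∧ J ⊆ M₂.carrier ∧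
  (∀ a ∈ J, F.nf M₀ M₁ a M₂) ∧
  ∃ (αs : Ordinal.{u}) (t : Ordinal.{u} → Ω) (Ms : Ordinal.{u} → ModelOn τ Ω),
    (∀ α, α < αs → t α ∈ J) ∧
    (∀ a ∈ J, ∃ α, α < αs ∧ t α = a) ∧
    (∀ α β, α < β → β < αs → t α ≠ t β) ∧
    (∀ α β, α ≤ β → β ≤ αs + 1 → F.C.le (Ms α) (Ms β)) ∧
    F.C.le M₁ (Ms 0) ∧ F.C.le M₂ (Ms (αs + 1)) ∧
    (∀ α, α < αs → t α ∈ (Ms (α + 1)).carrier ∧ F.nf M₀ (Ms α) (t α) (Ms (α + 1)))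

/-- `J` is independent in `(M, N)`. -/
def IndependentIn (F : GoodFrame τ Ω μ lam κ ι) (M N : ModelOn τ Ω) (J : Set Ω) : Prop :=
  F.Independent M M N J

/-- `(M,N,J) ∈ K^{3,bs}`. -/
def K3bs (F : GoodFrame τ Ω μ lam κ ι) (M N : ModelOn τ Ω) (J : Set Ω) : Prop :=
  F.C.le M N ∧ F.IndependentIn M N J

/-- `(M,N,J) ∈ K^{3,qr}`. -/
def K3qr (F : GoodFrame τ Ω μ lam κ ι) (M N : ModelOn τ Ω) (J : Set Ω) : Prop :=
  F.K3bs M N J ∧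
  ∀ (N' : ModelOn τ Ω) (h : Ω → Ω), F.C.le M N' →
    Set.InjOn h J → (∀ a ∈ J, h a ∈ N'.carrier) →
    F.K3bs M N' (h '' J) →
    ∃ g : ModelOn.Emb N N', F.C.IsKEmb N N' g ∧
      (∀ x ∈ M.carrier, g.toFun x = x) ∧ ∀ a ∈ J, g.toFun a = h a

/-- `𝔰` is a strongly good frame. -/
def StronglyGood (F : GoodFrame τ Ω μ lam κ ι) : Prop :=
  ∀ (M M₁ N : ModelOn τ Ω) (J₁ J₂ : Set Ω), Disjoint J₁ J₂ →
    F.K3bs M N (J₁ ∪ J₂) → F.C.le M M₁ → F.C.le M₁ N → F.K3qr M M₁ J₁ →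
    F.K3bs M₁ N J₂ ∧ ∀ a ∈ J₂, F.nf M M₁ a N

/-- `q` is a non-forking extension of the type `p`. -/
def NFExt (F : GoodFrame τ Ω μ lam κ ι) (p q : F.C.PtType) : Prop :=
  ∃ h : F.C.le p.M q.M, F.nf p.M q.M q.a q.N ∧
    F.C.TypeEquiv (q.restrict p.M h) p

/-- Two types are parallel when they have a common non-forking extension. -/
def Parallel (F : GoodFrame τ Ω μ lam κ ι) (p₁ p₂ : F.C.PtType) : Prop :=
  ∃ q : F.C.PtType, F.NFExt p₁ q ∧ F.NFExt p₂ q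

/-- Weak orthogonality of two basic types over the same model. -/
def WkOrth (F : GoodFrame τ Ω μ lam κ ι) (p₁ p₂ : F.C.PtType) : Prop :=
  p₁.M = p₂.M ∧
  ∀ (M₁ M₂ M₃ : ModelOn τ Ω) (a₁ a₂ : Ω)
    (h₁ : F.C.le p₁.M M₁) (h₂ : F.C.le p₁.M M₂),
    F.C.le M₁ M₃ → F.C.le M₂ M₃ →
    ∀ (ha₁ : a₁ ∈ M₁.carrier) (ha₂ : a₂ ∈ M₂.carrier),
    F.K3prT p₁.M M₁ a₁ → F.K3prT p₁.M M₂ a₂ →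
    F.C.TypeEquiv ⟨p₁.M, M₁, a₁, h₁, ha₁⟩ p₁ →
    F.C.TypeEquiv ⟨p₁.M, M₂, a₂, h₂, ha₂⟩ p₂ →
    F.nf p₁.M M₁ a₂ M₃

/-- Orthogonality: all pairs of non-forking extensions to a common model are
weakly orthogonal. -/
def Orth (F : GoodFrame τ Ω μ lam κ ι) (p₁ p₂ : F.C.PtType) : Prop :=
  ∀ q₁ q₂ : F.C.PtType, q₁.M = q₂.M → F.NFExt p₁ q₁ → F.NFExt p₂ q₂ → F.WkOrth q₁ q₂

/-- `p` is strongly dominated by `{p_t : t ∈ I}` (with common extension model `N⁺`). -/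
def StDom (F : GoodFrame τ Ω μ lam κ ι) {I : Type u} (p : F.C.PtType)
    (Nplus : ModelOn τ Ω) (pt : I → F.C.PtType) : Prop :=
  F.C.K Nplus ∧ F.C.le p.M Nplus ∧ (∀ t, F.C.le (pt t).M Nplus) ∧
  ∀ (Nstar : ModelOn τ Ω) (hst : F.C.le Nplus Nstar) (a : I → Ω),
    Function.Injective a →
    F.IndependentIn Nplus Nstar (Set.range a) →
    (∀ t, ∃ ha : a t ∈ Nstar.carrier,
      F.Parallel ⟨Nplus, Nstar, a t, hst, ha⟩ (pt t)) →
    ∀ p' : F.C.PtType, p'.M = Nplus → F.Parallel p' p →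
      ∃ (c : Ω) (hc : c ∈ Nstar.carrier),
        F.C.TypeEquiv ⟨Nplus, Nstar, c, hst, hc⟩ p'

/-- `p` is weakly dominated by `{p_t : t ∈ I}`. -/
def WkDom (F : GoodFrame τ Ω μ lam κ ι) {I : Type u} (p : F.C.PtType)
    (Nplus : ModelOn τ Ω) (pt : I → F.C.PtType) : Prop :=
  ∃ (J : Type u) (h : J → I), Function.Surjective h ∧ F.StDom p Nplus (pt ∘ h)

/-- `𝔰` is type-full: the basic types are exactly the non-algebraic ones. -/
def TypeFull (F : GoodFrame τ Ω μ lam κ ι) : Prop :=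
  ∀ t : F.C.PtType, t.a ∉ t.M.carrier → F.bs t

end GoodFrame


section LiftingAux

open Ordinal

namespace LiftAux

noncomputable instance instWOToType (o : Ordinal.{u}) : IsWellOrder o.ToType (· < ·) :=
  isWellOrder_lt

variable {κ χ : Cardinal.{u}}

/-- Surjection-based bound on the number of `<κ`-subsets. -/
lemma mk_small_subsets_le {B : Type u} {θ : Cardinal.{u}}
    (hreg : κ.IsRegular) (hθ : ℵ₀ ≤ θ) (hκθ : κ ≤ θ)
    (hpow : ∀ c < κ, (max #B ℵ₀) ^ c ≤ θ) :
    #{T : Set B // #T < κ} ≤ θ := by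
  classical
  have hOcard : #(κ.ord.ToType) = κ := by rw [Cardinal.mk_toType, Cardinal.card_ord]
  -- surjection from the sigma type
  have hsurj : ∃ f : (Σ i : κ.ord.ToType, {T : Set B // #T ≤ (Ordinal.typein (α := κ.ord.ToType) (· < ·) i).card}) →
      {T : Set B // #T < κ}, Function.Surjective f := by
    refine ⟨fun p => ⟨p.2.1, lt_of_le_of_lt p.2.2 ?_⟩, ?_⟩
    · exact (Cardinal.lt_ord).1 (Ordinal.typein_lt_self p.1)
    · rintro ⟨T, hT⟩
      have h1 : (#T).ord < Ordinal.type (α := κ.ord.ToType) (· < ·) := by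
        rw [Ordinal.type_toType]; exact Cardinal.ord_lt_ord.2 hT
      refine ⟨⟨Ordinal.enum (α := κ.ord.ToType) (· < ·) ⟨(#T).ord, h1⟩, T, ?_⟩, rfl⟩
      rw [Ordinal.typein_enum, Cardinal.card_ord]
  obtain ⟨f, hf⟩ := hsurj
  refine le_trans (Cardinal.mk_le_of_surjective hf) ?_
  rw [Cardinal.mk_sigma]
  calc (Cardinal.sum fun i : κ.ord.ToType =>
          #{T : Set B // #T ≤ (Ordinal.typein (α := κ.ord.ToType) (· < ·) i).card})
      ≤ Cardinal.sum fun _ : κ.ord.ToType => θ := by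
        refine Cardinal.sum_le_sum _ _ fun i => ?_
        refine le_trans (Cardinal.mk_bounded_set_le B _) ?_
        exact hpow _ ((Cardinal.lt_ord).1 (Ordinal.typein_lt_self i))
    _ = #(κ.ord.ToType) * θ := Cardinal.sum_const' (κ.ord.ToType) θ
    _ ≤ θ * θ := by rw [hOcard]; exact mul_le_mul_left hκθ θ
    _ = θ := Cardinal.mul_eq_self hθ

variable (hreg : κ.IsRegular) (hκχ : κ ≤ χ)

lemma aleph0_le_chi (hreg : κ.IsRegular) (hκχ : κ ≤ χ) : ℵ₀ ≤ χ := hreg.aleph0_le.trans hκχ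

lemma chi_le_powerlt (hreg : κ.IsRegular) (hκχ : κ ≤ χ) : χ ≤ χ ^< κ := by
  have : χ ^ (1 : Cardinal) ≤ χ ^< κ :=
    Cardinal.le_powerlt χ (lt_of_lt_of_le Cardinal.one_lt_aleph0 hreg.aleph0_le)
  rwa [Cardinal.power_one] at this

/-- Key: `(χ ^< κ) ^ c ≤ χ ^< κ` for `c < κ`, `κ` regular, `κ ≤ χ`. -/
lemma pow_powerlt_le (hreg : κ.IsRegular) (hκχ : κ ≤ χ) {c : Cardinal.{u}} (hc : c < κ) :
    (χ ^< κ) ^ c ≤ χ ^< κ := by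
  classical
  set ν := χ ^< κ with hν
  have hchi : ℵ₀ ≤ χ := aleph0_le_chi hreg hκχ
  have hχν : χ ≤ ν := chi_le_powerlt hreg hκχ
  have hnu : ℵ₀ ≤ ν := hchi.trans hχν
  set O := κ.ord.ToType
  have hOcard : #O = κ := by rw [Cardinal.mk_toType, Cardinal.card_ord]
  set X := χ.out
  have hX : #X = χ := Cardinal.mk_out χ
  have hBX : #(O × X) = χ := by
    rw [Cardinal.mk_prod, Cardinal.lift_id, Cardinal.lift_id, hOcard, hX]
    exact Cardinal.mul_eq_right hchi hκχ hreg.pos.ne'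
  set V := {T : Set (O × X) // #T < κ}
  -- #V ≤ ν
  have hVle : #V ≤ ν := by
    refine mk_small_subsets_le hreg hnu (hκχ.trans hχν) fun d hd => ?_
    have : max #(O × X) ℵ₀ = χ := by rw [hBX, max_eq_left hchi]
    rw [this]
    exact Cardinal.le_powerlt χ hd
  -- ν ≤ #V
  have hVge : ν ≤ #V := by
    rw [hν]
    refine Cardinal.powerlt_le.2 fun d hd => ?_
    have hd' : #(d.out) = d := Cardinal.mk_out d
    have hemb : Nonempty (d.out ↪ O) := by
      rw [← Cardinal.le_def, hd', hOcard]; exact hd.le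
    obtain ⟨e⟩ := hemb
    have : χ ^ d = #(d.out → X) := by
      rw [← Cardinal.power_def, hX, hd']
    rw [this]
    refine Cardinal.mk_le_of_injective (f := fun g : d.out → X =>
      (⟨Set.range (fun y => (e y, g y)), ?_⟩ : V)) ?_
    · exact lt_of_le_of_lt (Cardinal.mk_range_le.trans hd'.le) hd
    · intro g₁ g₂ h
      have h' : Set.range (fun y => (e y, g₁ y)) = Set.range (fun y => (e y, g₂ y)) :=
        congrArg Subtype.val h
      funext y
      have : (e y, g₁ y) ∈ Set.range (fun y => (e y, g₂ y)) := by
        rw [← h']; exact ⟨y, rfl⟩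
      obtain ⟨y', hy'⟩ := this
      have h1 : e y' = e y := congrArg Prod.fst hy'
      have h2 : g₂ y' = g₁ y := congrArg Prod.snd hy'
      rw [e.injective h1] at h2
      exact h2.symm
  -- main bound
  have key : (#V) ^ c ≤ ν := by
    have hc' : #(c.out) = c := Cardinal.mk_out c
    have h1 : (#V) ^ c = #(c.out → V) := by rw [← Cardinal.power_def, hc']
    rw [h1]
    -- surjection from Σ T : V, (c.out → Set T.1)
    have hsurj : ∃ Ψ : (Σ T : V, (c.out → Set (↥T.1))) → (c.out → V),
        Function.Surjective Ψ := by
      refine ⟨fun p s => ⟨Subtype.val '' p.2 s, ?_⟩, ?_⟩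
      · exact lt_of_le_of_lt ((Cardinal.mk_image_le).trans (Cardinal.mk_set_le _)) p.1.2
      · intro f
        have hT : #(⋃ s, (f s).1) < κ := by
          refine lt_of_le_of_lt (Cardinal.mk_iUnion_le _) ?_
          refine Cardinal.mul_lt_of_lt hreg.aleph0_le (by rwa [hc']) ?_
          exact Cardinal.iSup_lt_of_isRegular hreg (by rwa [hc']) fun s => (f s).2
        refine ⟨⟨⟨⋃ s, (f s).1, hT⟩, fun s => Subtype.val ⁻¹' (f s).1⟩, ?_⟩
        funext s
        apply Subtype.ext
        simp only
        rw [Subtype.image_preimage_coe]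
        exact Set.inter_eq_right.2 (Set.subset_iUnion (fun s => (f s).1) s)
    obtain ⟨Ψ, hΨ⟩ := hsurj
    refine le_trans (Cardinal.mk_le_of_surjective hΨ) ?_
    rw [Cardinal.mk_sigma]
    calc (Cardinal.sum fun T : V => #(c.out → Set (↥T.1)))
        ≤ Cardinal.sum fun _ : V => ν := by
          refine Cardinal.sum_le_sum _ _ fun T => ?_
          have : #(c.out → Set (↥T.1)) = (2 ^ #(↥T.1)) ^ c := by
            rw [← Cardinal.power_def, Cardinal.mk_set, hc']
          rw [this, ← Cardinal.power_mul]
          calc (2 : Cardinal) ^ (#(↥T.1) * c) ≤ χ ^ (#(↥T.1) * c) := by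
                refine Cardinal.power_le_power_right ?_
                exact (Cardinal.nat_lt_aleph0 2).le.trans hchi |>.trans (le_refl χ) |>.trans
                  (le_refl χ)
            _ ≤ ν := Cardinal.le_powerlt χ (Cardinal.mul_lt_of_lt hreg.aleph0_le T.2 hc)
      _ = #V * ν := Cardinal.sum_const' V ν
      _ ≤ ν * ν := mul_le_mul_left hVle ν
      _ = ν := Cardinal.mul_eq_self hnu
  exact le_trans (Cardinal.power_le_power_right hVge) key

/-- `#{S : Set A // #S < κ} ≤ χ ^< κ` whenever `#A ≤ χ ^< κ`. -/
lemma mk_small_subsets_le_powerlt (hreg : κ.IsRegular) (hκχ : κ ≤ χ)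
    {A : Type u} (hA : #A ≤ χ ^< κ) :
    #{S : Set A // #S < κ} ≤ χ ^< κ := by
  have hchi : ℵ₀ ≤ χ := aleph0_le_chi hreg hκχ
  have hnu : ℵ₀ ≤ χ ^< κ := hchi.trans (chi_le_powerlt hreg hκχ)
  refine mk_small_subsets_le hreg hnu (hκχ.trans (chi_le_powerlt hreg hκχ)) fun c hc => ?_
  calc (max #A ℵ₀) ^ c ≤ (χ ^< κ) ^ c :=
        Cardinal.power_le_power_right (max_le hA hnu)
    _ ≤ χ ^< κ := pow_powerlt_le hreg hκχ hc

/-- Strict upper bounds for small families in `κ.ord.ToType`. -/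
lemma exists_strict_ub (hreg : κ.IsRegular) {ι : Type u} (hι : #ι < κ)
    (f : ι → κ.ord.ToType) : ∃ j : κ.ord.ToType, ∀ y, f y < j := by
  have hcof : #ι < κ.ord.cof := by rwa [hreg.cof_eq]
  have hsup : (⨆ y, Ordinal.typein (α := κ.ord.ToType) (· < ·) (f y)) < κ.ord :=
    Ordinal.iSup_lt_ord hcof fun y => Ordinal.typein_lt_self (f y)
  have hlim : Order.IsSuccLimit κ.ord := Cardinal.isSuccLimit_ord hreg.aleph0_le
  have hsucc : Order.succ (⨆ y, Ordinal.typein (α := κ.ord.ToType) (· < ·) (f y)) < κ.ord :=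
    hlim.succ_lt hsup
  have hsucc' : Order.succ (⨆ y, Ordinal.typein (α := κ.ord.ToType) (· < ·) (f y)) <
      Ordinal.type (α := κ.ord.ToType) (· < ·) := by rwa [Ordinal.type_toType]
  refine ⟨Ordinal.enum (α := κ.ord.ToType) (· < ·) ⟨_, hsucc'⟩, fun y => ?_⟩
  have h1 : Ordinal.typein (α := κ.ord.ToType) (· < ·) (f y) <
      Ordinal.typein (α := κ.ord.ToType) (· < ·) (Ordinal.enum (α := κ.ord.ToType) (· < ·) ⟨_, hsucc'⟩) := by
    rw [Ordinal.typein_enum]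
    exact lt_of_le_of_lt (Ordinal.le_iSup _ y) (Order.lt_succ _)
  exact (Ordinal.typein_lt_typein (α := κ.ord.ToType) (· < ·)).1 h1

section Construction
open Classical

variable {τ : Vocab.{u}} {Ω : Type u} {μC μD : WithTop Cardinal.{u}} {lam κ : Cardinal.{u}}

/-- The identity embedding between two models with the same carrier which agree on it. -/
def idEmb (M N : ModelOn τ Ω) (hc : M.carrier = N.carrier)
    (hf : ∀ (f : τ.Func) (x : τ.arF f → Ω), (∀ i, x i ∈ M.carrier) →
      M.funcMap f x = N.funcMap f x)
    (hr : ∀ (r : τ.Rel) (x : τ.arR r → Ω), (∀ i, x i ∈ M.carrier) →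
      (M.relMap r x ↔ N.relMap r x)) : ModelOn.Emb M N where
  toFun := id
  maps := fun a ha => hc ▸ ha
  injOn := fun a _ b _ h => h
  map_func := fun f x hx => by
    simpa [Function.id_comp] using hf f x hx
  map_rel := fun r x hx => by
    simpa [Function.id_comp] using hr r x hx

lemma idEmb_isIso {M N : ModelOn τ Ω} (hc : M.carrier = N.carrier) hf hr :
    (idEmb M N hc hf hr).IsIso := by
  simpa [ModelOn.Emb.IsIso, idEmb] using hc

/-- The `λ`-sized `≤_C`-submodels of `M`. -/
def subLam (C : BasicClass τ Ω μC lam κ) (M : ModelOn τ Ω) : Set (ModelOn τ Ω) :=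
  {P | C.le P M ∧ #P.carrier = lam}

/-- A choice of a `λ`-sized `≤_C`-submodel of `M` containing `A`. -/
noncomputable def pick (C : BasicClass τ Ω μC lam κ) (M : ModelOn τ Ω) (A : Set Ω) :
    ModelOn τ Ω :=
  if h : C.K M ∧ A ⊆ M.carrier ∧ #A ≤ lam then (C.axVI M h.1 A h.2.1 h.2.2).choose else M

lemma pick_spec (C : BasicClass τ Ω μC lam κ) {M : ModelOn τ Ω} (hM : C.K M) {A : Set Ω}
    (h1 : A ⊆ M.carrier) (h2 : #A ≤ lam) :
    pick C M A ∈ subLam C M ∧ A ⊆ (pick C M A).carrier := by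
  have h : C.K M ∧ A ⊆ M.carrier ∧ #A ≤ lam := ⟨hM, h1, h2⟩
  rw [pick]
  rw [dif_pos h]
  obtain ⟨hle, hcard, hsub⟩ := (C.axVI M h.1 A h.2.1 h.2.2).choose_spec
  exact ⟨⟨hle, hcard⟩, hsub⟩

/-- A choice of a `λ`-sized `≤_C`-submodel of `M` above a small family of submodels. -/
noncomputable def qs (C : BasicClass τ Ω μC lam κ) (M : ModelOn τ Ω)
    (S : Set (ModelOn τ Ω)) : ModelOn τ Ω :=
  pick C M (⋃ P ∈ S, P.carrier)

lemma carrier_subset_of_subLam {C : BasicClass τ Ω μC lam κ} {M P : ModelOn τ Ω}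
    (hP : P ∈ subLam C M) : P.carrier ⊆ M.carrier :=
  (C.axI hP.1).1

lemma qs_spec (C : BasicClass τ Ω μC lam κ) {M : ModelOn τ Ω} (hM : C.K M)
    {S : Set (ModelOn τ Ω)} (hS : S ⊆ subLam C M) (hScard : #S < κ) :
    qs C M S ∈ subLam C M ∧ ∀ P ∈ S, C.le P (qs C M S) := by
  have hκlam : κ ≤ lam := C.kappa_le_lam
  have hlaminf : ℵ₀ ≤ lam := C.kappa_isRegular.aleph0_le.trans hκlam
  have hsub : (⋃ P ∈ S, P.carrier) ⊆ M.carrier := by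
    refine Set.iUnion₂_subset fun P hP => carrier_subset_of_subLam (hS hP)
  have hcard : #(⋃ P ∈ S, P.carrier) ≤ lam := by
    refine le_trans (Cardinal.mk_biUnion_le _ _) ?_
    have h1 : (⨆ P : S, #((P : ModelOn τ Ω).carrier)) ≤ lam :=
      ciSup_le' fun P => le_of_eq (hS P.2).2
    calc #S * ⨆ P : S, #((P : ModelOn τ Ω).carrier) ≤ lam * lam :=
          mul_le_mul' (le_trans hScard.le hκlam) h1
      _ = lam := Cardinal.mul_eq_self hlaminf
  obtain ⟨hmem, hsub'⟩ := pick_spec C hM hsub hcard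
  refine ⟨hmem, fun P hP => ?_⟩
  exact C.axV (hS hP).1 hmem.1 ((Set.subset_biUnion_of_mem hP).trans hsub')

/-- Base family: a `λ`-sized submodel through each point. -/
noncomputable def baseFam (C : BasicClass τ Ω μC lam κ) (M : ModelOn τ Ω) :
    Set (ModelOn τ Ω) :=
  (fun a => pick C M {a}) '' M.carrier

lemma baseFam_spec (C : BasicClass τ Ω μC lam κ) {M : ModelOn τ Ω} (hM : C.K M) :
    (baseFam C M ⊆ subLam C M) ∧ ∀ a ∈ M.carrier, a ∈ (pick C M {a}).carrier := by
  have h1 : (1 : Cardinal) ≤ lam :=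
    le_trans Cardinal.one_le_aleph0 (C.kappa_isRegular.aleph0_le.trans C.kappa_le_lam)
  constructor
  · rintro P ⟨a, ha, rfl⟩
    exact (pick_spec C hM (Set.singleton_subset_iff.2 ha)
      (by rw [Cardinal.mk_singleton]; exact h1)).1
  · intro a ha
    exact (pick_spec C hM (Set.singleton_subset_iff.2 ha)
      (by rw [Cardinal.mk_singleton]; exact h1)).2 rfl

/-- The `i`-th stage of the `κ`-directed closure of `baseFam C M ∪ s`. -/
noncomputable def famH (C : BasicClass τ Ω μC lam κ) (M : ModelOn τ Ω)
    (s : Set (ModelOn τ Ω)) (i : κ.ord.ToType) : Set (ModelOn τ Ω) :=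
  (baseFam C M ∪ s ∪ ⋃ j ∈ Set.Iio i, famH C M s j) ∪
    qs C M '' {S | S ⊆ baseFam C M ∪ s ∪ (⋃ j ∈ Set.Iio i, famH C M s j) ∧ #S < κ}
  termination_by i
  decreasing_by all_goals exact ‹_ ∈ Set.Iio _›

/-- The `κ`-directed closure of `baseFam C M ∪ s`. -/
noncomputable def fam (C : BasicClass τ Ω μC lam κ) (M : ModelOn τ Ω)
    (s : Set (ModelOn τ Ω)) : Set (ModelOn τ Ω) :=
  ⋃ i, famH C M s i

lemma famH_mono_stage {C : BasicClass τ Ω μC lam κ} {M : ModelOn τ Ω}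
    {s : Set (ModelOn τ Ω)} {j i : κ.ord.ToType} (h : j < i) :
    famH C M s j ⊆ famH C M s i := by
  rw [famH.eq_def (i := i)]
  intro P hP
  exact Or.inl (Or.inr (Set.mem_biUnion h hP))

lemma base_subset_famH {C : BasicClass τ Ω μC lam κ} {M : ModelOn τ Ω}
    {s : Set (ModelOn τ Ω)} (i : κ.ord.ToType) :
    baseFam C M ∪ s ⊆ famH C M s i := by
  rw [famH.eq_def]
  intro P hP
  rcases hP with hP | hP
  · exact Or.inl (Or.inl (Or.inl hP))
  · exact Or.inl (Or.inl (Or.inr hP))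

lemma famH_subLam {C : BasicClass τ Ω μC lam κ} {M : ModelOn τ Ω} (hM : C.K M)
    {s : Set (ModelOn τ Ω)} (hs : s ⊆ subLam C M) (i : κ.ord.ToType) :
    famH C M s i ⊆ subLam C M := by
  induction i using WellFoundedLT.induction with
  | _ i IH =>
    rw [famH.eq_def]
    have hG : baseFam C M ∪ s ∪ (⋃ j ∈ Set.Iio i, famH C M s j) ⊆ subLam C M := by
      refine Set.union_subset (Set.union_subset ((baseFam_spec C hM).1) hs) ?_
      exact Set.iUnion₂_subset fun j hj => IH j hj
    refine Set.union_subset hG ?_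
    rintro P ⟨S, ⟨hSsub, hScard⟩, rfl⟩
    exact (qs_spec C hM (hSsub.trans hG) hScard).1

lemma fam_subLam {C : BasicClass τ Ω μC lam κ} {M : ModelOn τ Ω} (hM : C.K M)
    {s : Set (ModelOn τ Ω)} (hs : s ⊆ subLam C M) :
    fam C M s ⊆ subLam C M :=
  Set.iUnion_subset fun i => famH_subLam hM hs i

lemma famH_mono_seed {C : BasicClass τ Ω μC lam κ} {M : ModelOn τ Ω}
    {s s' : Set (ModelOn τ Ω)} (hss : s ⊆ s') (i : κ.ord.ToType) :
    famH C M s i ⊆ famH C M s' i := by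
  induction i using WellFoundedLT.induction with
  | _ i IH =>
    rw [famH.eq_def, famH.eq_def]
    have hG : baseFam C M ∪ s ∪ (⋃ j ∈ Set.Iio i, famH C M s j) ⊆
        baseFam C M ∪ s' ∪ (⋃ j ∈ Set.Iio i, famH C M s' j) := by
      refine Set.union_subset_union ?_ ?_
      · exact Set.union_subset_union (le_refl _) hss
      · exact Set.iUnion₂_mono fun j hj => IH j hj
    refine Set.union_subset_union hG ?_
    refine Set.image_mono ?_
    rintro S ⟨hSsub, hScard⟩
    exact ⟨hSsub.trans hG, hScard⟩

lemma fam_mono_seed {C : BasicClass τ Ω μC lam κ} {M : ModelOn τ Ω}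
    {s s' : Set (ModelOn τ Ω)} (hss : s ⊆ s') :
    fam C M s ⊆ fam C M s' :=
  Set.iUnion_mono fun i => famH_mono_seed hss i

lemma seed_subset_fam {C : BasicClass τ Ω μC lam κ} {M : ModelOn τ Ω}
    {s : Set (ModelOn τ Ω)} [Nonempty κ.ord.ToType] :
    baseFam C M ∪ s ⊆ fam C M s := by
  obtain ⟨i⟩ := ‹Nonempty κ.ord.ToType›
  exact (base_subset_famH i).trans (Set.subset_iUnion _ i)

lemma mk_setOf_subset_lt {α : Type u} (G : Set α) (κ : Cardinal.{u}) :
    #{S : Set α // S ⊆ G ∧ #S < κ} ≤ #{T : Set ↥G // #T < κ} := by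
  refine Cardinal.mk_le_of_injective (f := fun S =>
    ⟨Subtype.val ⁻¹' S.1, lt_of_le_of_lt
      (Cardinal.mk_preimage_of_injective _ _ Subtype.val_injective) S.2.2⟩) ?_
  rintro ⟨S, hS, hSc⟩ ⟨S', hS', hSc'⟩ h
  have h' : (Subtype.val ⁻¹' S : Set ↥G) = Subtype.val ⁻¹' S' := congrArg Subtype.val h
  apply Subtype.ext
  have e1 : Subtype.val '' (Subtype.val ⁻¹' S : Set ↥G) = S := by
    rw [Subtype.image_preimage_coe]
    exact Set.inter_eq_right.2 hS
  have e2 : Subtype.val '' (Subtype.val ⁻¹' S' : Set ↥G) = S' := by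
    rw [Subtype.image_preimage_coe]
    exact Set.inter_eq_right.2 hS'
  show S = S'
  rw [← e1, ← e2, h']

lemma famH_card {C : BasicClass τ Ω μC lam κ} {M : ModelOn τ Ω} (hM : C.K M)
    {s : Set (ModelOn τ Ω)} (hs : #s ≤ (#M.carrier) ^< κ) (i : κ.ord.ToType) :
    #(famH C M s i) ≤ (#M.carrier) ^< κ := by
  have hreg := C.kappa_isRegular
  have hκχ : κ ≤ #M.carrier := (C.kappa_le_lam).trans (C.size_ge M hM)
  set ν := (#M.carrier) ^< κ with hν
  have hχν : #M.carrier ≤ ν := chi_le_powerlt hreg hκχ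
  have hnuinf : ℵ₀ ≤ ν := (aleph0_le_chi hreg hκχ).trans hχν
  induction i using WellFoundedLT.induction with
  | _ i IH =>
    rw [famH.eq_def]
    have hbase : #(baseFam C M) ≤ ν := le_trans Cardinal.mk_image_le hχν
    have hUle : #(⋃ j ∈ Set.Iio i, famH C M s j) ≤ ν := by
      refine le_trans (Cardinal.mk_biUnion_le _ _) ?_
      have h1 : #(Set.Iio i) ≤ ν := by
        refine le_trans (Cardinal.mk_set_le _) ?_
        rw [Cardinal.mk_toType, Cardinal.card_ord]
        exact hκχ.trans hχν
      have h2 : (⨆ j : Set.Iio i, #(famH C M s j)) ≤ ν := ciSup_le' fun j => IH j j.2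
      calc #(Set.Iio i) * ⨆ j : Set.Iio i, #(famH C M s (j : κ.ord.ToType)) ≤ ν * ν :=
            mul_le_mul' h1 h2
        _ = ν := Cardinal.mul_eq_self hnuinf
    have hG : #(baseFam C M ∪ s ∪ ⋃ j ∈ Set.Iio i, famH C M s j : Set (ModelOn τ Ω)) ≤ ν := by
      refine le_trans (Cardinal.mk_union_le _ _) ?_
      refine le_trans (add_le_add (le_trans (Cardinal.mk_union_le _ _)
        (add_le_add hbase hs)) hUle) ?_
      rw [Cardinal.add_eq_self hnuinf, Cardinal.add_eq_self hnuinf]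
    have himg : #(qs C M ''
        {S | S ⊆ baseFam C M ∪ s ∪ (⋃ j ∈ Set.Iio i, famH C M s j) ∧ #S < κ}) ≤ ν := by
      refine le_trans Cardinal.mk_image_le ?_
      refine le_trans (mk_setOf_subset_lt _ κ) ?_
      exact mk_small_subsets_le_powerlt hreg hκχ hG
    refine le_trans (Cardinal.mk_union_le _ _) ?_
    rw [← Cardinal.add_eq_self hnuinf]
    exact add_le_add hG himg

lemma fam_card {C : BasicClass τ Ω μC lam κ} {M : ModelOn τ Ω} (hM : C.K M)
    {s : Set (ModelOn τ Ω)} (hs : #s ≤ (#M.carrier) ^< κ) :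
    #(fam C M s) ≤ (#M.carrier) ^< κ := by
  have hreg := C.kappa_isRegular
  have hκχ : κ ≤ #M.carrier := (C.kappa_le_lam).trans (C.size_ge M hM)
  have hχν : #M.carrier ≤ (#M.carrier) ^< κ := chi_le_powerlt hreg hκχ
  have hnuinf : ℵ₀ ≤ (#M.carrier) ^< κ := (aleph0_le_chi hreg hκχ).trans hχν
  refine le_trans (Cardinal.mk_iUnion_le _) ?_
  have h1 : #(κ.ord.ToType) ≤ (#M.carrier) ^< κ := by
    rw [Cardinal.mk_toType, Cardinal.card_ord]; exact hκχ.trans hχν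
  have h2 : (⨆ i, #(famH C M s i)) ≤ (#M.carrier) ^< κ :=
    ciSup_le' fun i => famH_card hM hs i
  calc #(κ.ord.ToType) * ⨆ i, #(famH C M s i) ≤
        ((#M.carrier) ^< κ) * ((#M.carrier) ^< κ) := mul_le_mul' h1 h2
    _ = (#M.carrier) ^< κ := Cardinal.mul_eq_self hnuinf

lemma fam_covers {C : BasicClass τ Ω μC lam κ} {M : ModelOn τ Ω} (hM : C.K M)
    {s : Set (ModelOn τ Ω)} (hs : s ⊆ subLam C M) :
    (⋃ P ∈ fam C M s, (P : ModelOn τ Ω).carrier) = M.carrier := by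
  have : Nonempty κ.ord.ToType := by
    rw [Ordinal.toType_nonempty_iff_ne_zero]
    intro h0
    have := Cardinal.ord_eq_zero.1 h0
    exact (C.kappa_isRegular.pos.ne' (by simpa using this))
  apply Set.Subset.antisymm
  · exact Set.iUnion₂_subset fun P hP => carrier_subset_of_subLam (fam_subLam hM hs hP)
  · intro a ha
    have hmem : pick C M {a} ∈ fam C M s :=
      seed_subset_fam (Or.inl ⟨a, ha, rfl⟩)
    exact Set.mem_biUnion hmem ((baseFam_spec C hM).2 a ha)

lemma fam_directed {C : BasicClass τ Ω μC lam κ} {M : ModelOn τ Ω} (hM : C.K M)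
    {s : Set (ModelOn τ Ω)} (hs : s ⊆ subLam C M) {T : Set (ModelOn τ Ω)}
    (hT : T ⊆ fam C M s) (hTcard : #T < κ) :
    ∃ Q ∈ fam C M s, ∀ P ∈ T, C.le P Q := by
  classical
  have hreg := C.kappa_isRegular
  -- pick a stage for each element of T
  have hstage : ∀ P : T, ∃ i : κ.ord.ToType, (P : ModelOn τ Ω) ∈ famH C M s i := by
    intro P
    exact Set.mem_iUnion.1 (hT P.2)
  choose g hg using hstage
  obtain ⟨j, hj⟩ := exists_strict_ub hreg hTcard g
  have hTsub : T ⊆ baseFam C M ∪ s ∪ ⋃ j' ∈ Set.Iio j, famH C M s j' := by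
    intro P hP
    exact Or.inr (Set.mem_biUnion (hj ⟨P, hP⟩) (hg ⟨P, hP⟩))
  have hQmem : qs C M T ∈ famH C M s j := by
    rw [famH.eq_def]
    exact Or.inr ⟨T, ⟨hTsub, hTcard⟩, rfl⟩
  refine ⟨qs C M T, Set.mem_iUnion.2 ⟨j, hQmem⟩, ?_⟩
  exact (qs_spec C hM (hT.trans (fam_subLam hM hs)) hTcard).2

lemma toType_nonempty_of_regular {κ : Cardinal.{u}} (hreg : κ.IsRegular) :
    Nonempty κ.ord.ToType := by
  rw [Ordinal.toType_nonempty_iff_ne_zero]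
  intro h0
  exact hreg.pos.ne' (by simpa using Cardinal.ord_eq_zero.1 h0)

lemma fam_system (C : BasicClass τ Ω μC lam κ) (D : BasicClass τ Ω μD lam κ)
    (hK : ∀ P : ModelOn τ Ω, #P.carrier = lam → (C.K P ↔ D.K P))
    (hle : ∀ P Q : ModelOn τ Ω, #P.carrier = lam → #Q.carrier = lam →
      (C.le P Q ↔ D.le P Q))
    {M : ModelOn τ Ω} (hM : C.K M) {s : Set (ModelOn τ Ω)} (hs : s ⊆ subLam C M) :
    IsPartialOrder (↥(fam C M s)) (fun a b => C.le a.1 b.1) ∧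
    KappaDirectedRel κ (fun a b : ↥(fam C M s) => C.le a.1 b.1) ∧
    D.IsSystem (fun a b : ↥(fam C M s) => C.le a.1 b.1) (fun a => a.1) ∧
    sysUnion (fun a : ↥(fam C M s) => (a : ModelOn τ Ω)) = M.carrier := by
  have hsubLam := fam_subLam hM hs
  have hKmem : ∀ a : ↥(fam C M s), C.K (a : ModelOn τ Ω) :=
    fun a => C.le_K_left (hsubLam a.2).1
  have hsize : ∀ a : ↥(fam C M s), #(a : ModelOn τ Ω).carrier = lam :=
    fun a => (hsubLam a.2).2
  refine ⟨?_, ?_, ?_, ?_⟩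
  · letI : IsRefl (↥(fam C M s)) (fun a b => C.le a.1 b.1) :=
      ⟨fun a => C.le_refl a.1 (hKmem a)⟩
    letI : IsTrans (↥(fam C M s)) (fun a b => C.le a.1 b.1) :=
      ⟨fun _ _ _ hab hbc => C.le_trans hab hbc⟩
    letI : IsAntisymm (↥(fam C M s)) (fun a b => C.le a.1 b.1) :=
      ⟨fun _ _ hab hba => Subtype.ext (C.le_antisymm hab hba)⟩
    letI : IsPreorder (↥(fam C M s)) (fun a b => C.le a.1 b.1) := ⟨⟩
    exact ⟨⟩
  · intro T hT
    obtain ⟨Q, hQmem, hQ⟩ := fam_directed hM hs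
      (T := Subtype.val '' T) (by rintro P ⟨x, hx, rfl⟩; exact x.2)
      (lt_of_le_of_lt Cardinal.mk_image_le hT)
    exact ⟨⟨Q, hQmem⟩, fun x hx => hQ x.1 ⟨x, hx, rfl⟩⟩
  · exact ⟨fun a => (hK a.1 (hsize a)).1 (hKmem a),
      fun a b hab => (hle a.1 b.1 (hsize a) (hsize b)).1 hab⟩
  · rw [sysUnion, ← fam_covers hM hs]
    exact (Set.biUnion_eq_iUnion (fam C M s) (fun P _ => P.carrier)).symm


/-- Core transfer lemma: if `C` and `D` agree in cardinality `λ`, `D` satisfies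
Ax III(d) and Ax IV(d), and `M ∈ K_C` has size `< μ_D`, then `M ∈ K_D` and every
`λ`-sized `≤_C`-submodel of `M` is a `≤_D`-submodel. -/
lemma core (C : BasicClass τ Ω μC lam κ) (D : BasicClass τ Ω μD lam κ)
    (hD3 : D.AxIIId) (hD4 : D.AxIVd)
    (hK : ∀ P : ModelOn τ Ω, #P.carrier = lam → (C.K P ↔ D.K P))
    (hle : ∀ P Q : ModelOn τ Ω, #P.carrier = lam → #Q.carrier = lam →
      (C.le P Q ↔ D.le P Q))
    (M : ModelOn τ Ω) (hM : C.K M)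
    (hMμ : ((#M.carrier : Cardinal.{u}) : WithTop Cardinal.{u}) < μD) :
    D.K M ∧ ∀ P, C.le P M → #P.carrier = lam → D.le P M := by
  classical
  haveI : Nonempty κ.ord.ToType := toType_nonempty_of_regular C.kappa_isRegular
  have hreg := C.kappa_isRegular
  have hκχ : κ ≤ #M.carrier := (C.kappa_le_lam).trans (C.size_ge M hM)
  set ν := (#M.carrier) ^< κ with hν
  have hχν : #M.carrier ≤ ν := chi_le_powerlt hreg hκχ
  have hνμ : ((ν : Cardinal.{u}) : WithTop Cardinal.{u}) < μD :=
    D.mu_powerlt_closed _ hMμ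
  -- the canonical bound for each seed
  have main : ∀ s : Set (ModelOn τ Ω), s ⊆ subLam C M → #s ≤ ν →
      ∃ N : ModelOn τ Ω, (D.K N ∧ N.carrier = M.carrier ∧
        ∀ P ∈ fam C M s, D.le P N) ∧
        ∀ N', D.K N' → N'.carrier = M.carrier → (∀ P ∈ fam C M s, D.le P N') →
          N' = N := by
    intro s hs hscard
    obtain ⟨hpo, hdir, hsysD, hUnion⟩ := fam_system C D hK hle hM hs
    have hIcard : ((#(↥(fam C M s)) : Cardinal.{u}) : WithTop Cardinal.{u}) < μD :=
      lt_of_le_of_lt (WithTop.coe_le_coe.2 (fam_card hM hscard)) hνμ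
    have hUμ : ((#(sysUnion (fun a : ↥(fam C M s) => (a : ModelOn τ Ω))) :
        Cardinal.{u}) : WithTop Cardinal.{u}) < μD := by
      rw [hUnion]; exact hMμ
    obtain ⟨N, ⟨hNK, hNc, hNb⟩, huniq⟩ :=
      hD3 (↥(fam C M s)) (fun a b => C.le a.1 b.1) hpo hdir
        (fun a => (a : ModelOn τ Ω)) hsysD hIcard hUμ
    refine ⟨N, ⟨hNK, hNc.trans hUnion, fun P hP => hNb ⟨P, hP⟩⟩, ?_⟩
    intro N' h1 h2 h3
    exact huniq N' ⟨h1, h2.trans hUnion.symm, fun a => h3 a.1 a.2⟩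
  obtain ⟨N, ⟨hNK, hNc, hNb⟩, hNu⟩ :=
    main ∅ (Set.empty_subset _) (by simp)
  -- every λ-sized ≤_C-submodel of M is a ≤_D-submodel of N
  have hPleN : ∀ P, C.le P M → #P.carrier = lam → D.le P N := by
    intro P hPM hPl
    have hPsub : ({P} : Set (ModelOn τ Ω)) ⊆ subLam C M := by
      intro Q hQ
      rw [Set.mem_singleton_iff] at hQ
      exact hQ ▸ ⟨hPM, hPl⟩
    have hcard1 : #({P} : Set (ModelOn τ Ω)) ≤ ν := by
      rw [Cardinal.mk_singleton]
      exact le_trans Cardinal.one_le_aleph0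
        ((aleph0_le_chi hreg hκχ).trans hχν)
    obtain ⟨N', ⟨hN'K, hN'c, hN'b⟩, _⟩ := main {P} hPsub hcard1
    have hEq : N' = N := hNu N' hN'K hN'c
      (fun Q hQ => hN'b Q (fam_mono_seed (Set.empty_subset _) hQ))
    have hPmem : P ∈ fam C M ({P} : Set (ModelOn τ Ω)) :=
      seed_subset_fam (Or.inr rfl)
    exact hEq ▸ hN'b P hPmem
  -- M and N agree on carrier tuples
  have hfunc : ∀ (f : τ.Func) (x : τ.arF f → Ω), (∀ i, x i ∈ M.carrier) →
      M.funcMap f x = N.funcMap f x := by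
    intro f x hx
    have hA : Set.range x ⊆ M.carrier := by rintro _ ⟨i, rfl⟩; exact hx i
    have hAcard : #(Set.range x) ≤ lam :=
      le_trans Cardinal.mk_range_le (C.arity_func_le f)
    obtain ⟨⟨hPle, hPcard⟩, hPsub⟩ := pick_spec C hM hA hAcard
    have hxP : ∀ i, x i ∈ (pick C M (Set.range x)).carrier :=
      fun i => hPsub ⟨i, rfl⟩
    have h1 := (C.axI hPle).2.1 f x hxP
    have h2 := (D.axI (hPleN _ hPle hPcard)).2.1 f x hxP
    rw [← h1, h2]
  have hrel : ∀ (r : τ.Rel) (x : τ.arR r → Ω), (∀ i, x i ∈ M.carrier) →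
      (M.relMap r x ↔ N.relMap r x) := by
    intro r x hx
    have hA : Set.range x ⊆ M.carrier := by rintro _ ⟨i, rfl⟩; exact hx i
    have hAcard : #(Set.range x) ≤ lam :=
      le_trans Cardinal.mk_range_le (C.arity_rel_le r)
    obtain ⟨⟨hPle, hPcard⟩, hPsub⟩ := pick_spec C hM hA hAcard
    have hxP : ∀ i, x i ∈ (pick C M (Set.range x)).carrier :=
      fun i => hPsub ⟨i, rfl⟩
    have h1 := (C.axI hPle).2.2 r x hxP
    have h2 := (D.axI (hPleN _ hPle hPcard)).2.2 r x hxP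
    rw [← h1, h2]
  -- N is isomorphic to M via the identity
  have hfunc' : ∀ (f : τ.Func) (x : τ.arF f → Ω), (∀ i, x i ∈ N.carrier) →
      N.funcMap f x = M.funcMap f x :=
    fun f x hx => (hfunc f x (fun i => hNc ▸ hx i)).symm
  have hrel' : ∀ (r : τ.Rel) (x : τ.arR r → Ω), (∀ i, x i ∈ N.carrier) →
      (N.relMap r x ↔ M.relMap r x) :=
    fun r x hx => (hrel r x (fun i => hNc ▸ hx i)).symm
  have hDKM : D.K M :=
    D.K_isoClosed ⟨idEmb N M hNc hfunc' hrel', idEmb_isIso hNc hfunc' hrel'⟩ hNK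
  refine ⟨hDKM, fun P h1 h2 => ?_⟩
  have h3 : D.le P N := hPleN P h1 h2
  exact D.le_isoClosed (idEmb N M hNc hfunc' hrel') (idEmb_isIso hNc hfunc' hrel')
    (D.axI h3) (C.axI h1) (by simp [idEmb]) h3

/-- Core transfer lemma for the order. -/
lemma le_core (C : BasicClass τ Ω μC lam κ) (D : BasicClass τ Ω μD lam κ)
    (hD3 : D.AxIIId) (hD4 : D.AxIVd)
    (hK : ∀ P : ModelOn τ Ω, #P.carrier = lam → (C.K P ↔ D.K P))
    (hle : ∀ P Q : ModelOn τ Ω, #P.carrier = lam → #Q.carrier = lam →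
      (C.le P Q ↔ D.le P Q))
    {M N : ModelOn τ Ω} (hMN : C.le M N)
    (hMμ : ((#M.carrier : Cardinal.{u}) : WithTop Cardinal.{u}) < μD)
    (hNμ : ((#N.carrier : Cardinal.{u}) : WithTop Cardinal.{u}) < μD) :
    D.le M N := by
  have hM : C.K M := C.le_K_left hMN
  have hN : C.K N := C.le_K_right hMN
  obtain ⟨hDM, hPM⟩ := core C D hD3 hD4 hK hle M hM hMμ
  obtain ⟨hDN, hPN⟩ := core C D hD3 hD4 hK hle N hN hNμ
  obtain ⟨hpo, hdir, hsysD, hUnion⟩ :=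
    fam_system C D hK hle hM (Set.empty_subset (subLam C M))
  have hsubLam := fam_subLam hM (Set.empty_subset (subLam C M))
  refine hD4 (↥(fam C M (∅ : Set (ModelOn τ Ω)))) (fun a b => C.le a.1 b.1) hpo hdir
    (fun a => (a : ModelOn τ Ω)) hsysD M hDM
    (fun a => hPM a.1 (hsubLam a.2).1 (hsubLam a.2).2) hUnion.symm N hDN
    (fun a => hPN a.1 (C.le_trans (hsubLam a.2).1 hMN) (hsubLam a.2).2)

end Construction

end LiftAux


end LiftingAux

/-- Theorem 1.13 (Sh1238), uniqueness of the lifting: two DAECs (with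
Ax III(d), Ax IV(d)) agreeing in cardinality `λ` agree below `μ₁`. -/
theorem uniqueness_of_lifting
    {τ : Vocab.{u}} {Ω : Type u} {μ₁ μ₂ : WithTop Cardinal.{u}} {lam κ : Cardinal.{u}}
    (C₁ : BasicClass τ Ω μ₁ lam κ) (C₂ : BasicClass τ Ω μ₂ lam κ)
    (hμ : μ₁ ≤ μ₂)
    (hd₁ : C₁.AxIIIa ∧ C₁.AxIVa ∧ C₁.AxIIIb ∧ C₁.AxIVb ∧ C₁.AxIIId ∧ C₁.AxIVd)
    (hd₂ : C₂.AxIIIa ∧ C₂.AxIVa ∧ C₂.AxIIIb ∧ C₂.AxIVb ∧ C₂.AxIIId ∧ C₂.AxIVd)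
    (hK : ∀ M : ModelOn τ Ω, #M.carrier = lam → (C₁.K M ↔ C₂.K M))
    (hle : ∀ M N : ModelOn τ Ω, #M.carrier = lam → #N.carrier = lam →
      (C₁.le M N ↔ C₂.le M N)) :
    (∀ M : ModelOn τ Ω,
      C₁.K M ↔ (C₂.K M ∧ ((#M.carrier : Cardinal.{u}) : WithTop Cardinal.{u}) < μ₁)) ∧
    (∀ M N : ModelOn τ Ω,
      C₁.le M N ↔ (C₂.le M N ∧
        ((#M.carrier : Cardinal.{u}) : WithTop Cardinal.{u}) < μ₁ ∧
        ((#N.carrier : Cardinal.{u}) : WithTop Cardinal.{u}) < μ₁)) := by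
  obtain ⟨_, _, _, _, h1d3, h1d4⟩ := hd₁
  obtain ⟨_, _, _, _, h2d3, h2d4⟩ := hd₂
  have hK' : ∀ P : ModelOn τ Ω, #P.carrier = lam → (C₂.K P ↔ C₁.K P) :=
    fun P h => (hK P h).symm
  have hle' : ∀ P Q : ModelOn τ Ω, #P.carrier = lam → #Q.carrier = lam →
      (C₂.le P Q ↔ C₁.le P Q) := fun P Q h1 h2 => (hle P Q h1 h2).symm
  constructor
  · intro M
    constructor
    · intro h
      have hsz := C₁.size_lt M h
      exact ⟨(LiftAux.core C₁ C₂ h2d3 h2d4 hK hle M h (lt_of_lt_of_le hsz hμ)).1, hsz⟩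
    · rintro ⟨h2, hsz⟩
      exact (LiftAux.core C₂ C₁ h1d3 h1d4 hK' hle' M h2 hsz).1
  · intro M N
    constructor
    · intro h
      have hszM := C₁.size_lt M (C₁.le_K_left h)
      have hszN := C₁.size_lt N (C₁.le_K_right h)
      exact ⟨LiftAux.le_core C₁ C₂ h2d3 h2d4 hK hle h
        (lt_of_lt_of_le hszM hμ) (lt_of_lt_of_le hszN hμ), hszM, hszN⟩
    · rintro ⟨h, hszM, hszN⟩
      exact LiftAux.le_core C₂ C₁ h1d3 h1d4 hK' hle' h hszM hszN
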